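/- arXiv:2510.01964 — 5 statements merged into one kernel-verified Lean document; each statement's English description precedes it below -/
import Mathlib

section
/- Let n ≥ 1 and q ≥ 1. Let S, S′ be real n×n matrices and let P, P′ be symmetric real n×n matrices satisfying q⁻¹·I ≤ P ≤ q·I and q⁻¹·I ≤ P′ ≤ q·I in the Loewner order. Then |λ(S,P) − λ(S′,P′)| ≤ q·‖S − S′‖ + q²·‖S‖·‖P − P′‖, where ‖·‖ is the ℓ²-operator norm on matrices. -/
open Matrix
open scoped InnerProductSpace

/-- The `ℓ²`-operator norm of a real `n × n` matrix. -/
noncomputable def l2OpNorm {n : ℕ} (M : Matrix (Fin n) (Fin n) ℝ) : ℝ :=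
  ‖LinearMap.toContinuousLinearMap (Matrix.toEuclideanLin M)‖

/-- `λ(S, P) = sup over v ∈ ℝⁿ \ {0} of (vᵀ S v) / (vᵀ P v)`. -/
noncomputable def rayleighSup {n : ℕ} (S P : Matrix (Fin n) (Fin n) ℝ) : ℝ :=
  sSup {r : ℝ | ∃ v : Fin n → ℝ, v ≠ 0 ∧ r = (v ⬝ᵥ S.mulVec v) / (v ⬝ᵥ P.mulVec v)}

lemma aux_ratio_le (a b t D0 q : ℝ) (ht : 0 < t) (hq : 0 < q)
    (ha : |a| ≤ D0 * t) (hb : q⁻¹ * t ≤ b) : a / b ≤ q * D0 := by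
  have hb0 : 0 < b := lt_of_lt_of_le (by positivity) hb
  have hD0 : 0 ≤ D0 := by nlinarith [abs_nonneg a]
  have h5 : q * D0 * (q⁻¹ * t) = D0 * t := by field_simp
  rw [div_le_iff₀ hb0]
  have h6 := mul_le_mul_of_nonneg_left hb (mul_nonneg hq.le hD0)
  linarith [le_abs_self a]

lemma aux_quot_diff_bound {a a' b b' t D0 D1 D2 q : ℝ} (ht : 0 < t) (hq : 0 < q)
    (hb : q⁻¹ * t ≤ b) (hb' : q⁻¹ * t ≤ b')
    (ha : |a| ≤ D0 * t) (h1 : |a - a'| ≤ D1 * t) (h2 : |b - b'| ≤ D2 * t) :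
    |a / b - a' / b'| ≤ q * D1 + q ^ 2 * D0 * D2 := by
  have hb0 : 0 < b := lt_of_lt_of_le (by positivity) hb
  have hb'0 : 0 < b' := lt_of_lt_of_le (by positivity) hb'
  have hD0 : 0 ≤ D0 := by nlinarith [abs_nonneg a]
  have hD1 : 0 ≤ D1 := by nlinarith [abs_nonneg (a - a')]
  have hD2 : 0 ≤ D2 := by nlinarith [abs_nonneg (b - b')]
  have hqq : q * q⁻¹ = 1 := mul_inv_cancel₀ hq.ne'
  have htb' : t ≤ q * b' := by nlinarith
  have htb : t ≤ q * b := by nlinarith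
  rw [div_sub_div _ _ hb0.ne' hb'0.ne', abs_div, abs_of_pos (mul_pos hb0 hb'0),
    div_le_iff₀ (mul_pos hb0 hb'0), show b * a' = a' * b from mul_comm _ _]
  have h2' : |b' - b| ≤ D2 * t := by rwa [abs_sub_comm]
  have key : |a * b' - a' * b| ≤ |a - a'| * b + |a| * |b' - b| := by
    calc |a * b' - a' * b| = |(a - a') * b + a * (b' - b)| := by ring_nf
      _ ≤ |(a - a') * b| + |a * (b' - b)| := abs_add_le _ _
      _ = |a - a'| * b + |a| * |b' - b| := by rw [abs_mul, abs_mul, abs_of_pos hb0]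
  have f1 : |a - a'| * b ≤ D1 * t * b := mul_le_mul_of_nonneg_right h1 hb0.le
  have f2 : D1 * t * b ≤ D1 * (q * b') * b :=
    mul_le_mul_of_nonneg_right (mul_le_mul_of_nonneg_left htb' hD1) hb0.le
  have f3 : |a| * |b' - b| ≤ D0 * t * (D2 * t) :=
    mul_le_mul ha h2' (abs_nonneg _) (by positivity)
  have f4 : D0 * D2 * (t * t) ≤ D0 * D2 * (q * b * (q * b')) :=
    mul_le_mul_of_nonneg_left (mul_le_mul htb htb' ht.le (by positivity))
      (mul_nonneg hD0 hD2)
  nlinarith [key, f1, f2, f3, f4]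

/-- Quadratic-form bound via the operator norm. -/
lemma aux_quad_bound {n : ℕ} (M : Matrix (Fin n) (Fin n) ℝ) (v : Fin n → ℝ) :
    |v ⬝ᵥ M.mulVec v| ≤ l2OpNorm M * (v ⬝ᵥ v) := by
  set w : EuclideanSpace ℝ (Fin n) := (WithLp.equiv 2 (Fin n → ℝ)).symm v with hw
  have h1 : v ⬝ᵥ M.mulVec v = ⟪w, (Matrix.toEuclideanLin M) w⟫_ℝ := by
    rw [hw, WithLp.equiv_symm_apply, Matrix.toEuclideanLin_apply_piLp_toLp,
      EuclideanSpace.inner_toLp_toLp]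
    simp [dotProduct_comm]
  have h2 : v ⬝ᵥ v = ‖w‖ ^ 2 := by
    rw [← real_inner_self_eq_norm_sq, hw, WithLp.equiv_symm_apply, EuclideanSpace.inner_toLp_toLp]
    simp
  rw [h1, h2]
  calc |⟪w, (Matrix.toEuclideanLin M) w⟫_ℝ| ≤ ‖w‖ * ‖(Matrix.toEuclideanLin M) w‖ :=
        abs_real_inner_le_norm _ _
    _ ≤ ‖w‖ * (l2OpNorm M * ‖w‖) := by
        apply mul_le_mul_of_nonneg_left _ (norm_nonneg w)
        exact (LinearMap.toContinuousLinearMap (Matrix.toEuclideanLin M)).le_opNorm w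
    _ = l2OpNorm M * ‖w‖ ^ 2 := by ring

lemma aux_lower_bound {n : ℕ} {q : ℝ} {P : Matrix (Fin n) (Fin n) ℝ}
    (h : (P - q⁻¹ • (1 : Matrix (Fin n) (Fin n) ℝ)).PosSemidef) (v : Fin n → ℝ) :
    q⁻¹ * (v ⬝ᵥ v) ≤ v ⬝ᵥ P.mulVec v := by
  have h2 := h.dotProduct_mulVec_nonneg v
  simp only [sub_mulVec, smul_mulVec, one_mulVec, dotProduct_sub,
    dotProduct_smul, star_trivial, smul_eq_mul] at h2
  linarith

lemma aux_dp_self_pos {n : ℕ} {v : Fin n → ℝ} (hv : v ≠ 0) : 0 < v ⬝ᵥ v := by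
  have h1 : v ⬝ᵥ v ≠ 0 := fun h => hv (dotProduct_self_eq_zero.mp h)
  have h2 : 0 ≤ v ⬝ᵥ v := Finset.sum_nonneg fun i _ => mul_self_nonneg _
  exact h2.lt_of_ne' h1

/-- the matrix Lipschitz estimate `(eq:sigmadiff)` from the proof of
Lemma 3.7: if `P, P'` are symmetric with `q⁻¹·I ≤ P, P' ≤ q·I` in the Loewner order, then
`|λ(S,P) - λ(S',P')| ≤ q·‖S - S'‖ + q²·‖S‖·‖P - P'‖` in the `ℓ²`-operator norm. -/
theorem stmt0 {n : ℕ} (hn : 1 ≤ n) {q : ℝ} (hq : 1 ≤ q)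
    (S S' P P' : Matrix (Fin n) (Fin n) ℝ)
    (hPsymm : P.IsSymm) (hP'symm : P'.IsSymm)
    (hP₁ : (P - q⁻¹ • (1 : Matrix (Fin n) (Fin n) ℝ)).PosSemidef)
    (hP₂ : (q • (1 : Matrix (Fin n) (Fin n) ℝ) - P).PosSemidef)
    (hP'₁ : (P' - q⁻¹ • (1 : Matrix (Fin n) (Fin n) ℝ)).PosSemidef)
    (hP'₂ : (q • (1 : Matrix (Fin n) (Fin n) ℝ) - P').PosSemidef) :
    |rayleighSup S P - rayleighSup S' P'| ≤
      q * l2OpNorm (S - S') + q ^ 2 * l2OpNorm S * l2OpNorm (P - P') := by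
  have hq0 : 0 < q := lt_of_lt_of_le one_pos hq
  set C : ℝ := q * l2OpNorm (S - S') + q ^ 2 * l2OpNorm S * l2OpNorm (P - P') with hC
  -- the two sets
  set A : Set ℝ := {r : ℝ | ∃ v : Fin n → ℝ, v ≠ 0 ∧ r = (v ⬝ᵥ S.mulVec v) / (v ⬝ᵥ P.mulVec v)}
  set A' : Set ℝ := {r : ℝ | ∃ v : Fin n → ℝ, v ≠ 0 ∧ r = (v ⬝ᵥ S'.mulVec v) / (v ⬝ᵥ P'.mulVec v)}
  have v₀ : Fin n → ℝ := fun _ => 1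
  have hv₀ : (fun _ => (1:ℝ) : Fin n → ℝ) ≠ 0 := by
    intro h
    have := congrFun h ⟨0, hn⟩
    simp at this
  have hAne : A.Nonempty := ⟨_, _, hv₀, rfl⟩
  have hA'ne : A'.Nonempty := ⟨_, _, hv₀, rfl⟩
  have hAbdd : BddAbove A := by
    refine ⟨q * l2OpNorm S, ?_⟩
    rintro r ⟨v, hv, rfl⟩
    exact aux_ratio_le _ _ _ _ _ (aux_dp_self_pos hv) hq0 (aux_quad_bound S v)
      (aux_lower_bound hP₁ v)
  have hA'bdd : BddAbove A' := by
    refine ⟨q * l2OpNorm S', ?_⟩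
    rintro r ⟨v, hv, rfl⟩
    exact aux_ratio_le _ _ _ _ _ (aux_dp_self_pos hv) hq0 (aux_quad_bound S' v)
      (aux_lower_bound hP'₁ v)
  -- pointwise estimate
  have key : ∀ v : Fin n → ℝ, v ≠ 0 →
      |(v ⬝ᵥ S.mulVec v) / (v ⬝ᵥ P.mulVec v) - (v ⬝ᵥ S'.mulVec v) / (v ⬝ᵥ P'.mulVec v)| ≤ C := by
    intro v hv
    have hd1 : |v ⬝ᵥ S.mulVec v - v ⬝ᵥ S'.mulVec v| ≤ l2OpNorm (S - S') * (v ⬝ᵥ v) := by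
      have h := aux_quad_bound (S - S') v
      rwa [sub_mulVec, dotProduct_sub] at h
    have hd2 : |v ⬝ᵥ P.mulVec v - v ⬝ᵥ P'.mulVec v| ≤ l2OpNorm (P - P') * (v ⬝ᵥ v) := by
      have h := aux_quad_bound (P - P') v
      rwa [sub_mulVec, dotProduct_sub] at h
    exact aux_quot_diff_bound (aux_dp_self_pos hv) hq0
      (aux_lower_bound hP₁ v) (aux_lower_bound hP'₁ v)
      (aux_quad_bound S v) hd1 hd2
  have h1 : rayleighSup S P ≤ rayleighSup S' P' + C := by
    apply csSup_le hAne
    rintro r ⟨v, hv, rfl⟩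
    have hm : (v ⬝ᵥ S'.mulVec v) / (v ⬝ᵥ P'.mulVec v) ≤ rayleighSup S' P' :=
      le_csSup hA'bdd ⟨v, hv, rfl⟩
    have hk := abs_sub_le_iff.mp (key v hv)
    linarith [hk.1]
  have h2 : rayleighSup S' P' ≤ rayleighSup S P + C := by
    apply csSup_le hA'ne
    rintro r ⟨v, hv, rfl⟩
    have hm : (v ⬝ᵥ S.mulVec v) / (v ⬝ᵥ P.mulVec v) ≤ rayleighSup S P :=
      le_csSup hAbdd ⟨v, hv, rfl⟩
    have hk := abs_sub_le_iff.mp (key v hv)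
    linarith [hk.2]
  rw [abs_sub_le_iff]
  constructor <;> linarith
end

section
/- Let c₀ ∈ ℝ and c = (c₁,c₂,c₃) ∈ ℝ³, and let M′(c₀,c) be the symmetric 6×6 real matrix M′(c₀,c) = c₀·I₆ + Σ_{ℓ=1}^{3} c_ℓ · [[0, B_ℓ],[B_ℓᵀ, 0]] (2×2 block form with 3×3 blocks). Then the set of eigenvalues of M′(c₀,c) equals {c₀, c₀+|c|/2, c₀−|c|/2}, where |c| = √(c₁²+c₂²+c₃²); in particular M′(c₀,c) is positive definite if and only if c₀ > |c|/2. -/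
set_option maxHeartbeats 4000000
set_option maxRecDepth 40000

open Matrix

/-- The three `3 × 3` matrices `A_{3,1}, A_{3,2}, A_{3,3}` of Lemma 4.9 of the paper. -/
noncomputable def B3mats : Fin 3 → Matrix (Fin 3) (Fin 3) ℝ :=
  ![!![0, 0, 0;
      0, 0, -(1/2);
      0, 1/2, 0],
    !![0, 0, 1/2;
      0, 0, 0;
      -(1/2), 0, 0],
    !![0, -(1/2), 0;
      1/2, 0, 0;
      0, 0, 0]]

/-- The symmetric `6 × 6` matrix
`M′(c₀,c) = c₀·I + Σ_ℓ c_ℓ · [[0, B_ℓ],[B_ℓᵀ, 0]]` (with `3 × 3` blocks). -/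
noncomputable def M6 (c₀ : ℝ) (c : Fin 3 → ℝ) :
    Matrix (Fin 3 ⊕ Fin 3) (Fin 3 ⊕ Fin 3) ℝ :=
  c₀ • (1 : Matrix (Fin 3 ⊕ Fin 3) (Fin 3 ⊕ Fin 3) ℝ) +
    ∑ l : Fin 3, c l • Matrix.fromBlocks 0 (B3mats l) (B3mats l)ᵀ 0

/-- explicit 6×6 model of `t•1 - (M6 0 c)`-type matrices -/
noncomputable def Emat (t a b d : ℝ) : Matrix (Fin 6) (Fin 6) ℝ :=
  !![t,0,0,0,d/2,-(b/2);
     0,t,0,-(d/2),0,a/2;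
     0,0,t,b/2,-(a/2),0;
     0,-(d/2),b/2,t,0,0;
     d/2,0,-(a/2),0,t,0;
     -(b/2),a/2,0,0,0,t]

lemma Emat_det (t a b d : ℝ) :
    det (Emat t a b d) = t^2*(t^2-(a^2+b^2+d^2)/4)^2 := by
  simp [Emat, Matrix.det_succ_row_zero, Fin.sum_univ_succ, Fin.succAbove]
  ring

lemma sub_M6_eq (c₀ μ : ℝ) (c : Fin 3 → ℝ) :
    μ • (1 : Matrix (Fin 3 ⊕ Fin 3) (Fin 3 ⊕ Fin 3) ℝ) - M6 c₀ c =
      (reindex finSumFinEquiv.symm finSumFinEquiv.symm) (Emat (μ - c₀) (c 0) (c 1) (c 2)) := by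
  ext i j
  rcases i with i | i <;> rcases j with j | j <;> fin_cases i <;> fin_cases j <;>
    norm_num [M6, B3mats, Emat, Fin.sum_univ_succ, Matrix.one_apply, finSumFinEquiv,
      Fin.castAdd, Fin.natAdd, Fin.castLE, Fin.ext_iff, Sum.inl_ne_inr, Sum.inr_ne_inl, Matrix.transpose_apply, Matrix.vecHead, Matrix.vecTail] <;> ring

lemma M6_det (c₀ μ : ℝ) (c : Fin 3 → ℝ) :
    det (μ • (1 : Matrix (Fin 3 ⊕ Fin 3) (Fin 3 ⊕ Fin 3) ℝ) - M6 c₀ c) =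
      (μ - c₀)^2 * ((μ - c₀)^2 - ((c 0)^2 + (c 1)^2 + (c 2)^2)/4)^2 := by
  rw [sub_M6_eq, Matrix.det_reindex_self, Emat_det]

lemma M6_spectrum (c₀ : ℝ) (c : Fin 3 → ℝ) :
    spectrum ℝ (M6 c₀ c) =
      {c₀, c₀ + Real.sqrt ((c 0) ^ 2 + (c 1) ^ 2 + (c 2) ^ 2) / 2,
           c₀ - Real.sqrt ((c 0) ^ 2 + (c 1) ^ 2 + (c 2) ^ 2) / 2} := by
  set s : ℝ := (c 0) ^ 2 + (c 1) ^ 2 + (c 2) ^ 2 with hs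
  have hs0 : (0:ℝ) ≤ s := by positivity
  have hq : Real.sqrt s ^ 2 = s := Real.sq_sqrt hs0
  ext μ
  rw [spectrum.mem_iff]
  have halg : algebraMap ℝ (Matrix (Fin 3 ⊕ Fin 3) (Fin 3 ⊕ Fin 3) ℝ) μ - M6 c₀ c =
      μ • (1 : Matrix (Fin 3 ⊕ Fin 3) (Fin 3 ⊕ Fin 3) ℝ) - M6 c₀ c := by
    rw [Algebra.algebraMap_eq_smul_one]
  rw [halg, Matrix.isUnit_iff_isUnit_det, isUnit_iff_ne_zero, not_not, M6_det]
  simp only [Set.mem_insert_iff, Set.mem_singleton_iff]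
  constructor
  · intro h
    rcases mul_eq_zero.1 h with h | h
    · left
      have := pow_eq_zero_iff (n := 2) (by norm_num) |>.1 h
      linarith [sub_eq_zero.1 this]
    · have h2 : (μ - c₀)^2 = (Real.sqrt s / 2)^2 := by
        have := pow_eq_zero_iff (n := 2) (by norm_num) |>.1 h
        have : (μ - c₀)^2 = s / 4 := by linarith
        rw [this, div_pow, hq]; ring
      rcases sq_eq_sq_iff_eq_or_eq_neg.1 h2 with h3 | h3
      · right; left; linarith
      · right; right; linarith
  · intro h
    rcases h with h | h | h
    · subst h; ring
    · subst h
      have : (c₀ + Real.sqrt s / 2 - c₀)^2 = s / 4 := by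
        rw [show c₀ + Real.sqrt s / 2 - c₀ = Real.sqrt s / 2 by ring, div_pow, hq]; ring
      rw [this]; ring
    · subst h
      have : (c₀ - Real.sqrt s / 2 - c₀)^2 = s / 4 := by
        rw [show c₀ - Real.sqrt s / 2 - c₀ = -(Real.sqrt s / 2) by ring, neg_pow, div_pow, hq]
        ring
      rw [this]; ring

lemma Emat_symm (t a b d : ℝ) : (Emat t a b d)ᴴ = Emat t a b d := by
  ext i j
  fin_cases i <;> fin_cases j <;> rfl

lemma M6_eq_reindex (c₀ : ℝ) (c : Fin 3 → ℝ) :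
    M6 c₀ c =
      (reindex finSumFinEquiv.symm finSumFinEquiv.symm) (Emat c₀ (-(c 0)) (-(c 1)) (-(c 2))) := by
  ext i j
  rcases i with i | i <;> rcases j with j | j <;> fin_cases i <;> fin_cases j <;>
    norm_num [M6, B3mats, Emat, Fin.sum_univ_succ, Matrix.one_apply, finSumFinEquiv,
      Fin.castAdd, Fin.natAdd, Fin.castLE, Fin.ext_iff, Sum.inl_ne_inr, Sum.inr_ne_inl,
      Matrix.transpose_apply, Matrix.vecHead, Matrix.vecTail] <;> ring

lemma M6_isHermitian (c₀ : ℝ) (c : Fin 3 → ℝ) : (M6 c₀ c).IsHermitian := by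
  rw [M6_eq_reindex]
  show _ᴴ = _
  simp only [reindex_apply, Matrix.conjTranspose_submatrix]
  rw [Emat_symm]

/-- Remark 4.12 (case k = 3) of the paper: the set of eigenvalues of
`M′(c₀,c)` is `{c₀, c₀ ± |c|/2}`; in particular `M′(c₀,c)` is positive definite iff
`c₀ > |c|/2`. -/
theorem stmt2 (c₀ : ℝ) (c : Fin 3 → ℝ) :
    spectrum ℝ (M6 c₀ c) =
      {c₀, c₀ + Real.sqrt ((c 0) ^ 2 + (c 1) ^ 2 + (c 2) ^ 2) / 2,
           c₀ - Real.sqrt ((c 0) ^ 2 + (c 1) ^ 2 + (c 2) ^ 2) / 2} ∧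
    ((M6 c₀ c).PosDef ↔ Real.sqrt ((c 0) ^ 2 + (c 1) ^ 2 + (c 2) ^ 2) / 2 < c₀) := by
  refine ⟨M6_spectrum c₀ c, ?_⟩
  set s : ℝ := (c 0) ^ 2 + (c 1) ^ 2 + (c 2) ^ 2 with hs
  set q : ℝ := Real.sqrt s with hqdef
  have hq0 : (0:ℝ) ≤ q := Real.sqrt_nonneg _
  constructor
  · intro hPD
    by_contra hlt
    push_neg at hlt
    have hmem : c₀ - q / 2 ∈ spectrum ℝ (M6 c₀ c) := by
      rw [M6_spectrum]
      right; right; rfl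
    rw [spectrum.mem_iff] at hmem
    apply hmem
    have h1 : algebraMap ℝ (Matrix (Fin 3 ⊕ Fin 3) (Fin 3 ⊕ Fin 3) ℝ) (c₀ - q / 2) - M6 c₀ c =
        -(M6 c₀ c + (-(c₀ - q / 2)) • (1 : Matrix (Fin 3 ⊕ Fin 3) (Fin 3 ⊕ Fin 3) ℝ)) := by
      rw [Algebra.algebraMap_eq_smul_one]
      module
    rw [h1]
    have hsemi : ((-(c₀ - q / 2)) •
        (1 : Matrix (Fin 3 ⊕ Fin 3) (Fin 3 ⊕ Fin 3) ℝ)).PosSemidef := by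
      rw [Matrix.smul_one_eq_diagonal]
      exact Matrix.posSemidef_diagonal_iff.2 fun i => by simp; linarith
    exact ((hPD.add_posSemidef hsemi).isUnit).neg
  · intro h
    have hdecomp : M6 c₀ c =
        ((c₀ - q / 2) • (1 : Matrix (Fin 3 ⊕ Fin 3) (Fin 3 ⊕ Fin 3) ℝ)) + M6 (q / 2) c := by
      unfold M6
      module
    rw [hdecomp]
    apply Matrix.PosDef.add_posSemidef
    · rw [Matrix.smul_one_eq_diagonal]
      exact Matrix.posDef_diagonal_iff.2 fun i => by linarith
    · have hH := M6_isHermitian (q / 2) c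
      apply hH.posSemidef_iff_eigenvalues_nonneg.mpr
      intro i
      have hmem := hH.eigenvalues_mem_spectrum_real i
      rw [M6_spectrum] at hmem
      simp only [Set.mem_insert_iff, Set.mem_singleton_iff, ← hs, ← hqdef] at hmem
      rcases hmem with h1 | h1 | h1 <;> rw [Pi.zero_apply, h1] <;> linarith
end

section
/- For all τ ∈ (0,π) and a ∈ [−1,1), the quantity √(1−a)·cos(τ/2) + √(1+a)·sin(τ/2) is strictly positive, and the identity sin τ / (2·√((1−cos τ)(1−a))) − (√(1−a²)/(2(1−a)))·√((1−cos τ)/(1−a)) = (cos τ − a) / (√2·(1−a)·(√(1−a)·cos(τ/2) + √(1+a)·sin(τ/2))) holds. In particular, if moreover cos τ > a then the left-hand side is strictly positive. -/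
/-- the identity `(eq:Phi/h)` of Lemma 5.2, in the variables `(τ, a)`:
for `τ ∈ (0,π)` and `a ∈ [-1,1)`, the quantity `√(1-a)·cos(τ/2) + √(1+a)·sin(τ/2)` is
positive, the stated identity holds, and if moreover `cos τ > a` the left-hand side is
positive. -/
theorem stmt4 (τ a : ℝ) (hτ : τ ∈ Set.Ioo (0 : ℝ) Real.pi) (ha : a ∈ Set.Ico (-1 : ℝ) 1) :
    0 < Real.sqrt (1 - a) * Real.cos (τ / 2) + Real.sqrt (1 + a) * Real.sin (τ / 2) ∧
    Real.sin τ / (2 * Real.sqrt ((1 - Real.cos τ) * (1 - a)))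
        - Real.sqrt (1 - a ^ 2) / (2 * (1 - a)) * Real.sqrt ((1 - Real.cos τ) / (1 - a))
      = (Real.cos τ - a) /
          (Real.sqrt 2 * (1 - a) *
            (Real.sqrt (1 - a) * Real.cos (τ / 2) + Real.sqrt (1 + a) * Real.sin (τ / 2))) ∧
    (a < Real.cos τ →
      0 < Real.sin τ / (2 * Real.sqrt ((1 - Real.cos τ) * (1 - a)))
          - Real.sqrt (1 - a ^ 2) / (2 * (1 - a)) * Real.sqrt ((1 - Real.cos τ) / (1 - a))) := by
  obtain ⟨hτ0, hτπ⟩ := hτ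
  obtain ⟨ha1, ha2⟩ := ha
  set u := Real.sqrt (1 - a) with hu_def
  set v := Real.sqrt (1 + a) with hv_def
  set s := Real.sin (τ / 2) with hs_def
  set c := Real.cos (τ / 2) with hc_def
  have h1a : (0:ℝ) < 1 - a := by linarith
  have h1a' : (0:ℝ) ≤ 1 + a := by linarith
  have hu : 0 < u := Real.sqrt_pos.mpr h1a
  have hv : 0 ≤ v := Real.sqrt_nonneg _
  have hu2 : u ^ 2 = 1 - a := Real.sq_sqrt h1a.le
  have hv2 : v ^ 2 = 1 + a := Real.sq_sqrt h1a'
  have hs : 0 < s := Real.sin_pos_of_pos_of_lt_pi (by linarith) (by linarith)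
  have hc : 0 < c := Real.cos_pos_of_mem_Ioo ⟨by linarith [Real.pi_pos], by linarith⟩
  have hsc : s ^ 2 + c ^ 2 = 1 := Real.sin_sq_add_cos_sq _
  have hcosτ : Real.cos τ = 1 - 2 * s ^ 2 := by
    have h2 : τ = 2 * (τ / 2) := by ring
    rw [h2, Real.cos_two_mul]
    nlinarith
  have hsinτ : Real.sin τ = 2 * s * c := by
    have h2 : τ = 2 * (τ / 2) := by ring
    rw [h2, Real.sin_two_mul]
  have hsqrt2 : Real.sqrt 2 ^ 2 = 2 := Real.sq_sqrt (by norm_num)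
  have hsqrt2pos : (0:ℝ) < Real.sqrt 2 := Real.sqrt_pos.mpr (by norm_num)
  have h1 : Real.sqrt ((1 - Real.cos τ) * (1 - a)) = Real.sqrt 2 * s * u := by
    have : (1 - Real.cos τ) * (1 - a) = (Real.sqrt 2 * s * u) ^ 2 := by
      rw [hcosτ]; rw [mul_pow, mul_pow, hsqrt2, hu2]; ring
    rw [this, Real.sqrt_sq (by positivity)]
  have h2 : Real.sqrt ((1 - Real.cos τ) / (1 - a)) = Real.sqrt 2 * s / u := by
    have : (1 - Real.cos τ) / (1 - a) = (Real.sqrt 2 * s / u) ^ 2 := by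
      rw [hcosτ, div_pow, mul_pow, hsqrt2, hu2]; ring
    rw [this, Real.sqrt_sq (by positivity)]
  have h3 : Real.sqrt (1 - a ^ 2) = u * v := by
    rw [show (1 : ℝ) - a ^ 2 = (1 - a) * (1 + a) by ring, Real.sqrt_mul h1a.le]
  have hpos : 0 < u * c + v * s := by positivity
  have hfactor : Real.cos τ - a = (u * c - v * s) * (u * c + v * s) := by
    rw [hcosτ]; nlinarith [hu2, hv2, hsc]
  have heq : Real.sin τ / (2 * Real.sqrt ((1 - Real.cos τ) * (1 - a)))
        - Real.sqrt (1 - a ^ 2) / (2 * (1 - a)) * Real.sqrt ((1 - Real.cos τ) / (1 - a))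
      = (Real.cos τ - a) / (Real.sqrt 2 * (1 - a) * (u * c + v * s)) := by
    rw [h1, h2, h3, hsinτ, hfactor, ← hu2]
    rw [show Real.sqrt 2 * u ^ 2 * (u * c + v * s)
        = (Real.sqrt 2 * u ^ 2) * (u * c + v * s) from rfl,
      mul_div_mul_right _ _ hpos.ne']
    field_simp
    ring_nf
    linear_combination (- s * v) * hsqrt2
  refine ⟨hpos, heq, fun hlt => ?_⟩
  rw [heq]
  apply div_pos (by linarith) (by positivity)
end

section
/- Let s ∈ (0,1]. Let τ ∈ [0,π) and ξ = (ξ¹,ξ²,ξ³,ξ⁴) ∈ S³ be such that ℏ(τ,ξ) > 0, cos τ ≥ ξ⁴, (τ,ξ) ≠ (0,(0,0,0,1)), and 𝔰(τ,ξ) ≤ s. Then τ < π/2 with tan τ ≤ (2/3)·s (equivalently τ ≤ arctan((2/3)s)), and (1−s²)/(1+s²) ≤ ξ⁴ < 1. -/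
set_option maxHeartbeats 800000 in
/-- Remark 5.1 (rem:Dstau) of the paper. On the region near spacelike
infinity where `ℏ = cos τ + ξ⁴ > 0`, `cos τ ≥ ξ⁴`, `(τ,ξ) ≠ i₀ = (0,(0,0,0,1))` and
`𝔰 = (2 sin τ + √(1-(ξ⁴)²))/ℏ ≤ s`, one has `τ ∈ [0, arctan((2/3)s)]` and
`ξ⁴ ∈ [(1-s²)/(1+s²), 1)`. Here `ξ = (ξ¹,ξ²,ξ³,ξ⁴)` is a point of `S³ ⊆ ℝ⁴`,
indexed so that `ξ 3 = ξ⁴`. -/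
theorem stmt5 (s : ℝ) (hs : s ∈ Set.Ioc (0 : ℝ) 1)
    (τ : ℝ) (hτ : τ ∈ Set.Ico (0 : ℝ) Real.pi)
    (ξ : Fin 4 → ℝ) (hξ : (ξ 0) ^ 2 + (ξ 1) ^ 2 + (ξ 2) ^ 2 + (ξ 3) ^ 2 = 1)
    (hhbar : 0 < Real.cos τ + ξ 3)
    (hh : ξ 3 ≤ Real.cos τ)
    (hne : ¬(τ = 0 ∧ ξ = ![0, 0, 0, 1]))
    (hsle : (2 * Real.sin τ + Real.sqrt (1 - (ξ 3) ^ 2)) / (Real.cos τ + ξ 3) ≤ s) :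
    τ < Real.pi / 2 ∧ Real.tan τ ≤ 2 / 3 * s ∧ τ ≤ Real.arctan (2 / 3 * s) ∧
    (1 - s ^ 2) / (1 + s ^ 2) ≤ ξ 3 ∧ ξ 3 < 1 := by
  obtain ⟨hs0, hs1⟩ := hs
  obtain ⟨hτ0, hτπ⟩ := hτ
  have hc : 0 < Real.cos τ := by linarith
  have hsin : 0 ≤ Real.sin τ := Real.sin_nonneg_of_nonneg_of_le_pi hτ0 hτπ.le
  have hξ2 : (ξ 3) ^ 2 ≤ 1 := by nlinarith [sq_nonneg (ξ 0), sq_nonneg (ξ 1), sq_nonneg (ξ 2)]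
  have hsq : (0:ℝ) ≤ 1 - (ξ 3) ^ 2 := by linarith
  have hkey : 2 * Real.sin τ + Real.sqrt (1 - (ξ 3) ^ 2) ≤ s * (Real.cos τ + ξ 3) := by
    have := (div_le_iff₀ hhbar).mp hsle
    linarith
  have hpy : Real.sin τ ^ 2 + Real.cos τ ^ 2 = 1 := Real.sin_sq_add_cos_sq τ
  have hsinle : Real.sin τ ≤ Real.sqrt (1 - (ξ 3) ^ 2) := by
    rw [show Real.sin τ = Real.sqrt (Real.sin τ ^ 2) from (Real.sqrt_sq hsin).symm]
    apply Real.sqrt_le_sqrt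
    nlinarith
  -- 3 sin τ ≤ 2 s cos τ
  have h3 : 3 * Real.sin τ ≤ 2 * s * Real.cos τ := by nlinarith
  have htan : Real.tan τ ≤ 2 / 3 * s := by
    rw [Real.tan_eq_sin_div_cos, div_le_iff₀ hc]
    nlinarith
  have hτlt : τ < Real.pi / 2 := by
    by_contra h
    push_neg at h
    have := Real.cos_nonpos_of_pi_div_two_le_of_le h (by linarith [Real.pi_pos])
    linarith
  have harctan : τ ≤ Real.arctan (2 / 3 * s) := by
    have : Real.arctan (Real.tan τ) = τ := Real.arctan_tan (by linarith [Real.pi_pos]) hτlt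
    calc τ = Real.arctan (Real.tan τ) := this.symm
      _ ≤ Real.arctan (2 / 3 * s) := Real.arctan_strictMono.monotone htan
  have hξlt : ξ 3 < 1 := by
    rcases lt_or_ge (ξ 3) 1 with h | h
    · exact h
    · exfalso
      have he4 : ξ 3 = 1 := le_antisymm (by nlinarith) h
      have hc1 : Real.cos τ = 1 := le_antisymm (Real.cos_le_one τ) (by linarith)
      have hτeq : τ = 0 := by
        have := Real.cos_eq_one_iff_of_lt_of_lt (x := τ)
          (by linarith [Real.pi_pos]) (by linarith [Real.pi_pos])
        exact this.mp hc1
      have hsum : (ξ 0) ^ 2 + (ξ 1) ^ 2 + (ξ 2) ^ 2 = 0 := by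
        have : (ξ 3) ^ 2 = 1 := by rw [he4]; ring
        linarith
      have h0 : ξ 0 = 0 := by
        have : (ξ 0) ^ 2 = 0 := le_antisymm (by linarith [sq_nonneg (ξ 1), sq_nonneg (ξ 2)]) (sq_nonneg _)
        exact sq_eq_zero_iff.mp this
      have h1 : ξ 1 = 0 := by
        have : (ξ 1) ^ 2 = 0 := le_antisymm (by linarith [sq_nonneg (ξ 0), sq_nonneg (ξ 2)]) (sq_nonneg _)
        exact sq_eq_zero_iff.mp this
      have h2 : ξ 2 = 0 := by
        have : (ξ 2) ^ 2 = 0 := le_antisymm (by linarith [sq_nonneg (ξ 0), sq_nonneg (ξ 1)]) (sq_nonneg _)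
        exact sq_eq_zero_iff.mp this
      exact hne ⟨hτeq, by
        funext i
        fin_cases i <;> simp [h0, h1, h2, he4]⟩
  have h1ξ : 0 < 1 + ξ 3 := by linarith [Real.cos_le_one τ]
  have hsqrtle : Real.sqrt (1 - (ξ 3) ^ 2) ≤ s * (1 + ξ 3) := by
    calc Real.sqrt (1 - (ξ 3) ^ 2) ≤ s * (Real.cos τ + ξ 3) := by linarith
      _ ≤ s * (1 + ξ 3) := by nlinarith [Real.cos_le_one τ]
  have hsq2 : 1 - (ξ 3) ^ 2 ≤ (s * (1 + ξ 3)) ^ 2 := by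
    nlinarith [Real.sq_sqrt hsq, Real.sqrt_nonneg (1 - (ξ 3) ^ 2)]
  have hlb : (1 - s ^ 2) / (1 + s ^ 2) ≤ ξ 3 := by
    rw [div_le_iff₀ (by positivity)]
    nlinarith [sq_nonneg (1 + ξ 3)]
  exact ⟨hτlt, htan, harctan, hlb, hξlt⟩
end

section
/- Let g : (−∞,0] → ℝ be continuous, let φ : (−∞,0] → [0,∞] be measurable, and let k ∈ ℕ. For z₁, z₀ ≤ 0 set P(z₁,z₀) = exp(∫_{z₀}^{z₁} g(w) dw), and for z ≤ 0 set F(z) = ∫_{−∞}^{z} P(z,z′)·(1+|z−z′|)^k·φ(z′) dz′ ∈ [0,∞]. Then for every z ≤ 0, F(z) ≤ P(z,0)·F(0). -/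
open MeasureTheory

/-- the propagator monotonicity estimate `(eq:fconstbd)`/`(eq:fconstbdk)`
from the proof of Theorem 3.18: with `P(z₁,z₀) = exp(∫_{z₀}^{z₁} g)` and
`F(z) = ∫_{-∞}^{z} P(z,z')·(1+|z-z'|)^k·φ(z') dz' ∈ [0,∞]`, one has
`F(z) ≤ P(z,0)·F(0)` for every `z ≤ 0`. -/
theorem stmt17 (g : ℝ → ℝ) (hg : ContinuousOn g (Set.Iic (0 : ℝ)))
    (φ : ℝ → ENNReal) (hφ : Measurable φ) (k : ℕ) :
    ∀ z : ℝ, z ≤ 0 →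
      (∫⁻ z' in Set.Iic z,
          ENNReal.ofReal (Real.exp (∫ w in z'..z, g w) * (1 + |z - z'|) ^ k) * φ z') ≤
        ENNReal.ofReal (Real.exp (∫ w in (0 : ℝ)..z, g w)) *
          ∫⁻ z' in Set.Iic (0 : ℝ),
            ENNReal.ofReal (Real.exp (∫ w in z'..(0 : ℝ), g w) * (1 + |(0 : ℝ) - z'|) ^ k) *
              φ z' := by
  intro z hz
  set c := Real.exp (∫ w in (0 : ℝ)..z, g w) with hc
  set f : ℝ → ENNReal := fun z' =>
    ENNReal.ofReal (Real.exp (∫ w in z'..z, g w) * (1 + |z - z'|) ^ k) * φ z' with hf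
  set G : ℝ → ENNReal := fun z' =>
    ENNReal.ofReal (Real.exp (∫ w in z'..(0 : ℝ), g w) * (1 + |(0 : ℝ) - z'|) ^ k) * φ z'
    with hG
  have hkey : ∀ z', z' ≤ z → f z' ≤ ENNReal.ofReal c * G z' := by
    intro z' hz'
    have hint1 : IntervalIntegrable g MeasureTheory.volume z' 0 := by
      apply (hg.mono _).intervalIntegrable
      rw [Set.uIcc_of_le (hz'.trans hz)]
      exact Set.Icc_subset_Iic_self
    have hint2 : IntervalIntegrable g MeasureTheory.volume 0 z := by
      apply (hg.mono _).intervalIntegrable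
      rw [Set.uIcc_of_ge hz]
      exact Set.Icc_subset_Iic_self
    have hadd : (∫ w in z'..z, g w) = (∫ w in z'..(0 : ℝ), g w) + ∫ w in (0 : ℝ)..z, g w :=
      (intervalIntegral.integral_add_adjacent_intervals hint1 hint2).symm
    have hpow : (1 + |z - z'|) ^ k ≤ (1 + |(0 : ℝ) - z'|) ^ k := by
      apply pow_le_pow_left₀ (by positivity)
      have h1 : |z - z'| = z - z' := abs_of_nonneg (by linarith)
      have h2 : |(0 : ℝ) - z'| = 0 - z' := abs_of_nonneg (by linarith)
      rw [h1, h2]; linarith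
    have hreal : Real.exp (∫ w in z'..z, g w) * (1 + |z - z'|) ^ k ≤
        c * (Real.exp (∫ w in z'..(0 : ℝ), g w) * (1 + |(0 : ℝ) - z'|) ^ k) := by
      rw [hadd, Real.exp_add]
      calc Real.exp (∫ w in z'..(0 : ℝ), g w) * c * (1 + |z - z'|) ^ k
          ≤ Real.exp (∫ w in z'..(0 : ℝ), g w) * c * (1 + |(0 : ℝ) - z'|) ^ k := by
            apply mul_le_mul_of_nonneg_left hpow
            positivity
        _ = c * (Real.exp (∫ w in z'..(0 : ℝ), g w) * (1 + |(0 : ℝ) - z'|) ^ k) := by ring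
    have : ENNReal.ofReal (Real.exp (∫ w in z'..z, g w) * (1 + |z - z'|) ^ k) ≤
        ENNReal.ofReal c *
          ENNReal.ofReal (Real.exp (∫ w in z'..(0 : ℝ), g w) * (1 + |(0 : ℝ) - z'|) ^ k) := by
      rw [← ENNReal.ofReal_mul (Real.exp_nonneg _)]
      exact ENNReal.ofReal_le_ofReal hreal
    calc f z' ≤ (ENNReal.ofReal c *
          ENNReal.ofReal (Real.exp (∫ w in z'..(0 : ℝ), g w) * (1 + |(0 : ℝ) - z'|) ^ k)) *
          φ z' := mul_le_mul_left this _
      _ = ENNReal.ofReal c * G z' := by rw [hG, mul_assoc]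
  have h1 : (∫⁻ z' in Set.Iic z, f z') =
      ∫⁻ z' in Set.Iic (0 : ℝ), (Set.Iic z).indicator f z' := by
    rw [lintegral_indicator measurableSet_Iic,
      Measure.restrict_restrict measurableSet_Iic, Set.Iic_inter_Iic, min_eq_left hz]
  rw [h1, ← lintegral_const_mul' _ _ ENNReal.ofReal_ne_top]
  apply lintegral_mono
  intro z'
  by_cases h : z' ∈ Set.Iic z
  · rw [Set.indicator_of_mem h]
    exact hkey z' h
  · rw [Set.indicator_of_notMem h]
    exact zero_le
end
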